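/- Let S ≥ 2, let α, β ∈ ℝ with 0 ≤ α < β < 1, let g(j) = ((1−α)+(1−β)j)/(j+1), and let A be the S×S real matrix with A_{i,j} = g(j) for i ≤ j and 0 for i > j. Let P* ∈ ℝ^S be a probability vector that does not lie in the span of the eigenspaces of A corresponding to the eigenvalues g(1), …, g(S−1). Set s_n = Σ_{i=0}^{S−1} (A^n P*)_i. Then s_n ≠ 0 for all sufficiently large n, and A^n P*/s_n converges, as n → ∞, to the standard basis vector e_0 = (1, 0, …, 0); that is, the iterated Katz partial summations converge to the deterministic distribution concentrated at 0. -/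

import Mathlib

open Filter Finset

theorem stmt_8 (S : ℕ) (hS : 2 ≤ S) (α β : ℝ) (hα0 : 0 ≤ α) (hαβ : α < β) (hβ : β < 1)
    (g : ℕ → ℝ) (hg : ∀ j : ℕ, g j = ((1 - α) + (1 - β) * j) / (j + 1))
    (A : Matrix (Fin S) (Fin S) ℝ)
    (hA : ∀ i j : Fin S, A i j = if (i : ℕ) ≤ (j : ℕ) then g j else 0)
    (P : Fin S → ℝ) (hPnn : ∀ i, 0 ≤ P i) (hPsum : ∑ i, P i = 1)
    (hPspan : P ∉ Submodule.span ℝ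
      {u : Fin S → ℝ | ∃ j : Fin S, (j : ℕ) ≠ 0 ∧ A.mulVec u = g j • u})
    (s : ℕ → ℝ) (hs : ∀ n, s n = ∑ i, (A ^ n).mulVec P i) :
    (∀ᶠ n in atTop, s n ≠ 0) ∧
      Tendsto (fun n : ℕ => (s n)⁻¹ • (A ^ n).mulVec P) atTop
        (nhds (Pi.single (⟨0, by omega⟩ : Fin S) (1 : ℝ))) := by
  haveI : NeZero S := ⟨by omega⟩
  set z : Fin S := ⟨0, by omega⟩ with hzdef
  set e0 : Fin S → ℝ := Pi.single z 1 with he0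
  -- positivity and monotonicity of g
  have hgpos : ∀ j : ℕ, 0 < g j := by
    intro j
    rw [hg]
    have : (0:ℝ) ≤ (j:ℝ) := Nat.cast_nonneg j
    apply div_pos <;> nlinarith
  have hganti : ∀ i j : ℕ, i < j → g j < g i := by
    intro i j hij
    have hx : (0:ℝ) ≤ (i:ℝ) := Nat.cast_nonneg i
    have hxy : (i:ℝ) + 1 ≤ (j:ℝ) := by exact_mod_cast hij
    rw [hg, hg, div_lt_div_iff₀ (by positivity) (by positivity)]
    nlinarith
  -- eigenvector for the top eigenvalue g 0
  have hzval : (z : ℕ) = 0 := rfl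
  have hv0 : A.mulVec e0 = g 0 • e0 := by
    funext i
    simp only [he0, Matrix.mulVec, dotProduct, Pi.single_apply, mul_ite, mul_one,
      mul_zero, Finset.sum_ite_eq', Finset.mem_univ, if_true, Pi.smul_apply, smul_eq_mul]
    rw [hA]
    by_cases h : i = z
    · subst h; simp [hzval]
    · have : ¬ (i : ℕ) ≤ (z : ℕ) := by
        rw [hzval]
        simpa using fun h0 => h (Fin.ext (by simp [h0, hzval]))
      simp [this, h]
  -- existence of eigenvectors for every eigenvalue g j
  have hdet : ∀ j : Fin S, (A - g (j : ℕ) • 1).det = 0 := by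
    intro j
    have hbt : (A - g (j : ℕ) • (1 : Matrix (Fin S) (Fin S) ℝ)).BlockTriangular id := by
      apply Matrix.BlockTriangular.sub
      · intro i k hik
        rw [hA]
        have : ¬ (i : ℕ) ≤ (k : ℕ) := by
          simp only [id] at hik
          exact not_le.mpr hik
        simp [this]
      · intro i k hik
        have : i ≠ k := by
          intro h; subst h; exact lt_irrefl _ hik
        simp [Matrix.one_apply, this]
    rw [Matrix.det_of_upperTriangular hbt]
    apply Finset.prod_eq_zero (Finset.mem_univ j)
    simp [hA, Matrix.one_apply]
  have hexists : ∀ j : Fin S, ∃ v : Fin S → ℝ, v ≠ 0 ∧ A.mulVec v = g (j : ℕ) • v := by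
    intro j
    obtain ⟨v, hvne, hv⟩ := Matrix.exists_mulVec_eq_zero_iff.mpr (hdet j)
    refine ⟨v, hvne, ?_⟩
    rwa [Matrix.sub_mulVec, Matrix.smul_mulVec, Matrix.one_mulVec, sub_eq_zero] at hv
  choose vv hvvne hvveig using hexists
  set v : Fin S → (Fin S → ℝ) := fun j => if j = z then e0 else vv j with hvdef
  have hveig : ∀ j : Fin S, A.mulVec (v j) = g (j : ℕ) • v j := by
    intro j
    by_cases h : j = z
    · subst h; simp only [hvdef, if_pos rfl]; simpa [hzval] using hv0
    · simp only [hvdef, if_neg h]; exact hvveig j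
  have hvne : ∀ j : Fin S, v j ≠ 0 := by
    intro j
    by_cases h : j = z
    · subst h
      simp only [hvdef, if_pos rfl, he0]
      intro hc
      have := congrFun hc z
      simp at this
    · simp only [hvdef, if_neg h]; exact hvvne j
  -- linear independence of the eigenvectors
  have hinj : Function.Injective (fun j : Fin S => g (j : ℕ)) := by
    intro a b hab
    by_contra hne
    rcases lt_trichotomy a b with h | h | h
    · exact absurd hab (ne_of_gt (hganti _ _ (by exact_mod_cast h)))
    · exact hne h
    · exact absurd hab (ne_of_lt (hganti _ _ (by exact_mod_cast h)))
  have heig : ∀ j : Fin S, Module.End.HasEigenvector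
      (Matrix.mulVecLin A : Module.End ℝ (Fin S → ℝ)) (g (j : ℕ)) (v j) := by
    intro j
    refine ⟨?_, hvne j⟩
    rw [Module.End.mem_eigenspace_iff, Matrix.mulVecLin_apply]
    exact hveig j
  have hli : LinearIndependent ℝ v :=
    Module.End.eigenvectors_linearIndependent' (Matrix.mulVecLin A) _ hinj v heig
  have hcard : Fintype.card (Fin S) = Module.finrank ℝ (Fin S → ℝ) := by
    simp [Module.finrank_pi]
  let b : Module.Basis (Fin S) ℝ (Fin S → ℝ) := basisOfLinearIndependentOfCardEqFinrank hli hcard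
  have hb : ⇑b = v := coe_basisOfLinearIndependentOfCardEqFinrank hli hcard
  set c : Fin S → ℝ := fun j => b.repr P j with hcdef
  have hP : ∑ j, c j • v j = P := by
    rw [← hb]
    exact b.sum_repr P
  set w : Fin S → ℝ := ∑ j ∈ Finset.univ.erase z, c j • v j with hwdef
  have hw : w ∈ Submodule.span ℝ
      {u : Fin S → ℝ | ∃ j : Fin S, (j : ℕ) ≠ 0 ∧ A.mulVec u = g (j:ℕ) • u} := by
    apply Submodule.sum_mem
    intro j hj
    apply Submodule.smul_mem
    apply Submodule.subset_span
    refine ⟨j, ?_, hveig j⟩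
    intro h0
    exact (Finset.mem_erase.mp hj).1 (Fin.ext (by rw [h0, hzval]))
  have hPw : P = c z • v z + w := by
    rw [hwdef, ← hP]
    exact (Finset.add_sum_erase _ _ (Finset.mem_univ z)).symm
  have hc0 : c z ≠ 0 := by
    intro h
    apply hPspan
    rw [hPw, h, zero_smul, zero_add]
    exact hw
  -- powers on eigenvectors
  have hpow : ∀ (u : Fin S → ℝ) (μ : ℝ), A.mulVec u = μ • u →
      ∀ n : ℕ, (A ^ n).mulVec u = μ ^ n • u := by
    intro u μ h n
    induction n with
    | zero => simp [Matrix.one_mulVec]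
    | succ n ih =>
        have hA1 : A ^ (n + 1) = A * A ^ n := pow_succ' A n
        rw [hA1, ← Matrix.mulVec_mulVec, ih, Matrix.mulVec_smul, h, smul_smul, pow_succ]
  -- bound on elements of the span
  have hg10 : g 1 < g 0 := hganti 0 1 one_pos
  have hg1pos : 0 < g 1 := hgpos 1
  have hg0pos : 0 < g 0 := hgpos 0
  have hWbound : ∀ u ∈ Submodule.span ℝ
      {u : Fin S → ℝ | ∃ j : Fin S, (j : ℕ) ≠ 0 ∧ A.mulVec u = g (j:ℕ) • u},
      ∃ C : ℝ, 0 ≤ C ∧ ∀ (n : ℕ) (i : Fin S), |(A ^ n).mulVec u i| ≤ C * g 1 ^ n := by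
    intro u hu
    induction hu using Submodule.span_induction with
    | mem x hx =>
        obtain ⟨j, hj, hx⟩ := hx
        refine ⟨∑ i, |x i|, Finset.sum_nonneg fun i _ => abs_nonneg _, ?_⟩
        intro n i
        rw [hpow x _ hx n]
        have h1 : (1:ℕ) ≤ (j:ℕ) := Nat.one_le_iff_ne_zero.mpr hj
        have hgj : g (j:ℕ) ≤ g 1 := by
          rcases eq_or_lt_of_le h1 with h | h
          · rw [← h]
          · exact le_of_lt (hganti 1 _ h)
        have hgjpos : 0 < g (j:ℕ) := hgpos _
        have hxi : |x i| ≤ ∑ k, |x k| :=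
          Finset.single_le_sum (fun k _ => abs_nonneg (x k)) (Finset.mem_univ i)
        calc |(g (j:ℕ) ^ n • x) i| = g (j:ℕ) ^ n * |x i| := by
              rw [Pi.smul_apply, smul_eq_mul, abs_mul, abs_of_pos (pow_pos hgjpos n)]
          _ ≤ g 1 ^ n * (∑ k, |x k|) := by
              apply mul_le_mul (pow_le_pow_left₀ (le_of_lt hgjpos) hgj n) hxi (abs_nonneg _)
              positivity
          _ = (∑ k, |x k|) * g 1 ^ n := mul_comm _ _
    | zero =>
        exact ⟨0, le_rfl, by simp [Matrix.mulVec_zero]⟩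
    | add x y _ _ ihx ihy =>
        obtain ⟨C1, hC1, h1⟩ := ihx
        obtain ⟨C2, hC2, h2⟩ := ihy
        refine ⟨C1 + C2, by linarith, ?_⟩
        intro n i
        rw [Matrix.mulVec_add]
        calc |((A ^ n).mulVec x + (A ^ n).mulVec y) i|
            ≤ |(A ^ n).mulVec x i| + |(A ^ n).mulVec y i| := abs_add_le _ _
          _ ≤ C1 * g 1 ^ n + C2 * g 1 ^ n := add_le_add (h1 n i) (h2 n i)
          _ = (C1 + C2) * g 1 ^ n := by ring
    | smul a x _ ih =>
        obtain ⟨C, hC, hb⟩ := ih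
        refine ⟨|a| * C, by positivity, ?_⟩
        intro n i
        rw [Matrix.mulVec_smul]
        calc |(a • (A ^ n).mulVec x) i| = |a| * |(A ^ n).mulVec x i| := by
              rw [Pi.smul_apply, smul_eq_mul, abs_mul]
          _ ≤ |a| * (C * g 1 ^ n) := by
              apply mul_le_mul_of_nonneg_left (hb n i) (abs_nonneg a)
          _ = |a| * C * g 1 ^ n := by ring
  obtain ⟨C, hC0, hCb⟩ := hWbound w hw
  -- key decomposition of the iterates
  have hvz : v z = e0 := by simp [hvdef]
  have hv0' : A.mulVec (v z) = g 0 • v z := by rw [hvz]; exact hv0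
  have key : ∀ n : ℕ, (A ^ n).mulVec P = (c z * g 0 ^ n) • e0 + (A ^ n).mulVec w := by
    intro n
    rw [hPw, Matrix.mulVec_add, Matrix.mulVec_smul, hpow _ _ hv0' n, hvz, smul_smul, mul_comm]
  set t : ℕ → ℝ := fun n => ∑ i, (A ^ n).mulVec w i with htdef
  have hsum_e0 : ∑ i, e0 i = 1 := by simp [he0]
  have hsf : ∀ n, s n = c z * g 0 ^ n + t n := by
    intro n
    rw [hs n]
    simp only [key n, Pi.add_apply, Pi.smul_apply, smul_eq_mul, Finset.sum_add_distrib,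
      ← Finset.mul_sum, hsum_e0, mul_one, htdef]
  have ht : ∀ n, |t n| ≤ (S * C) * g 1 ^ n := by
    intro n
    calc |t n| ≤ ∑ i, |(A ^ n).mulVec w i| := Finset.abs_sum_le_sum_abs _ _
      _ ≤ ∑ _i : Fin S, C * g 1 ^ n := Finset.sum_le_sum fun i _ => hCb n i
      _ = (S * C) * g 1 ^ n := by simp [Finset.sum_const, mul_assoc]
  -- limits
  set q : ℝ := g 1 / g 0 with hqdef
  have hq0 : 0 ≤ q := le_of_lt (div_pos hg1pos hg0pos)
  have hq1 : q < 1 := (div_lt_one hg0pos).mpr hg10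
  have hqtend : Tendsto (fun n : ℕ => q ^ n) atTop (nhds 0) :=
    tendsto_pow_atTop_nhds_zero_of_lt_one hq0 hq1
  set ρ : ℕ → ℝ := fun n => c z + t n / g 0 ^ n with hρdef
  have hg0n : ∀ n : ℕ, (0:ℝ) < g 0 ^ n := fun n => pow_pos hg0pos n
  have hρtend : Tendsto ρ atTop (nhds (c z)) := by
    have h0 : Tendsto (fun n : ℕ => t n / g 0 ^ n) atTop (nhds 0) := by
      apply squeeze_zero_norm (f := fun n : ℕ => t n / g 0 ^ n)
        (a := fun n : ℕ => (S * C) * q ^ n)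
      · intro n
        have heq2 : (S:ℝ) * C * q ^ n = (S * C * g 1 ^ n) / g 0 ^ n := by
          rw [hqdef, div_pow]; ring
        rw [Real.norm_eq_abs, abs_div, abs_of_pos (hg0n n), heq2,
          div_le_div_iff₀ (hg0n n) (hg0n n)]
        exact mul_le_mul_of_nonneg_right (ht n) (le_of_lt (hg0n n))
      · simpa using hqtend.const_mul ((S:ℝ) * C)
    have := h0.const_add (c z)
    simpa [hρdef] using this
  have hsρ : ∀ n, s n = g 0 ^ n * ρ n := by
    intro n
    rw [hsf n, hρdef]
    field_simp
  have hev : ∀ᶠ n in atTop, ρ n ≠ 0 := hρtend.eventually_ne hc0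
  have hsne : ∀ᶠ n in atTop, s n ≠ 0 := by
    filter_upwards [hev] with n hn
    rw [hsρ n]
    exact mul_ne_zero (ne_of_gt (hg0n n)) hn
  refine ⟨hsne, ?_⟩
  -- final limit
  have hwtend : Tendsto (fun n : ℕ => (g 0 ^ n)⁻¹ • (A ^ n).mulVec w) atTop (nhds 0) := by
    rw [tendsto_pi_nhds]
    intro i
    apply squeeze_zero_norm (a := fun n : ℕ => C * q ^ n)
    · intro n
      have heq2 : C * q ^ n = (C * g 1 ^ n) / g 0 ^ n := by
        rw [hqdef, div_pow]; ring
      simp only [Pi.smul_apply, smul_eq_mul, Real.norm_eq_abs, abs_mul,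
        abs_inv, abs_of_pos (hg0n n)]
      rw [inv_mul_eq_div, heq2, div_le_div_iff₀ (hg0n n) (hg0n n)]
      exact mul_le_mul_of_nonneg_right (hCb n i) (le_of_lt (hg0n n))
    · simpa using hqtend.const_mul C
  have hFtend : Tendsto (fun n : ℕ => (ρ n)⁻¹ • (c z • e0 + (g 0 ^ n)⁻¹ • (A ^ n).mulVec w))
      atTop (nhds e0) := by
    have h1 : Tendsto (fun n : ℕ => (ρ n)⁻¹) atTop (nhds (c z)⁻¹) := hρtend.inv₀ hc0
    have h2 : Tendsto (fun n : ℕ => c z • e0 + (g 0 ^ n)⁻¹ • (A ^ n).mulVec w) atTop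
        (nhds (c z • e0 + 0)) := tendsto_const_nhds.add hwtend
    have := h1.smul h2
    rw [add_zero, smul_smul, inv_mul_cancel₀ hc0, one_smul] at this
    exact this
  have heq : (fun n : ℕ => (s n)⁻¹ • (A ^ n).mulVec P) =ᶠ[atTop]
      (fun n : ℕ => (ρ n)⁻¹ • (c z • e0 + (g 0 ^ n)⁻¹ • (A ^ n).mulVec w)) := by
    filter_upwards [hev] with n hn
    rw [key n, hsρ n]
    funext i
    simp only [Pi.smul_apply, Pi.add_apply, smul_eq_mul]
    rw [mul_inv]
    field_simp
  exact Tendsto.congr' heq.symm hFtend
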